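/- Suppose ν({x : p_{a,1}·f_{a,1}(x) = p_{a,0}·f_{a,0}(x)}) = 0 for a = 0 and a = 1 (the group Bayes classifiers are ν-a.e. unique), the data unfairness vanishes (TPR_0(T*_0) = TPR_1(T*_1) and TNR_0(T*_0) = TNR_1(T*_1)), and some classifier T achieves complete fairness and maximal accuracy in the sense that F_U(T) = 0 and Acc(T) = p_0·Acc_0(T*_0) + p_1·Acc_1(T*_1). Then T agrees with both T*_0 and T*_1 up to ν-null sets; in particular the group-optimal decision boundaries are identical: ν(T*_0 Δ T*_1) = 0. -/
import Mathlib


open MeasureTheory Set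

/-- True positive rate of group `a` under classifier `T`: `TPR_a(T) = ∫_T f_{a,1} dν`. -/
noncomputable def tprOf {Ω : Type*} [MeasurableSpace Ω] (ν : Measure Ω)
    (f : Bool → Bool → Ω → ℝ) (a : Bool) (T : Set Ω) : ℝ :=
  ∫ x in T, f a true x ∂ν

/-- True negative rate of group `a` under classifier `T`: `TNR_a(T) = ∫_{Tᶜ} f_{a,0} dν`. -/
noncomputable def tnrOf {Ω : Type*} [MeasurableSpace Ω] (ν : Measure Ω)
    (f : Bool → Bool → Ω → ℝ) (a : Bool) (T : Set Ω) : ℝ :=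
  ∫ x in Tᶜ, f a false x ∂ν

/-- Equalized-odds unfairness. -/
noncomputable def unfairness {Ω : Type*} [MeasurableSpace Ω] (ν : Measure Ω)
    (f : Bool → Bool → Ω → ℝ) (T : Set Ω) : ℝ :=
  (1/2) * |tprOf ν f true T - tprOf ν f false T|
    + (1/2) * |tnrOf ν f true T - tnrOf ν f false T|

/-- Accuracy of a classifier `T`. -/
noncomputable def accuracy {Ω : Type*} [MeasurableSpace Ω] (ν : Measure Ω)
    (f : Bool → Bool → Ω → ℝ) (p : Bool → Bool → ℝ) (T : Set Ω) : ℝ :=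
  (1/2) * (p false true * ∫ x in T, f false true x ∂ν
      + p true true * ∫ x in T, f true true x ∂ν)
  + (1/2) * (p false false * ∫ x in Tᶜ, f false false x ∂ν
      + p true false * ∫ x in Tᶜ, f true false x ∂ν)

/-- Group accuracy of a classifier `T` with respect to group `a`. -/
noncomputable def groupAccuracy {Ω : Type*} [MeasurableSpace Ω] (ν : Measure Ω)
    (f : Bool → Bool → Ω → ℝ) (p : Bool → Bool → ℝ) (a : Bool) (T : Set Ω) : ℝ :=
  ((1/2) * (p a true * ∫ x in T, f a true x ∂ν)
    + (1/2) * (p a false * ∫ x in Tᶜ, f a false x ∂ν)) / (p a true + p a false)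

private lemma null_of_setIntegral_zero {Ω : Type*} [MeasurableSpace Ω] {ν : Measure Ω}
    {g : Ω → ℝ} (hg : Measurable g) (hgi : Integrable g ν)
    {D : Set Ω} (hD : MeasurableSet D) (hpos : ∀ x ∈ D, 0 ≤ g x)
    (hz : ∫ x in D, g x ∂ν = 0) :
    ν (D ∩ {x | g x ≠ 0}) = 0 := by
  have h0 : 0 ≤ᵐ[ν.restrict D] g := (ae_restrict_iff' hD).2 (ae_of_all _ hpos)
  have h1 : g =ᵐ[ν.restrict D] 0 :=
    (integral_eq_zero_iff_of_nonneg_ae h0 hgi.integrableOn).1 hz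
  have hm : MeasurableSet {x | g x ≠ 0} := (hg (measurableSet_singleton 0)).compl
  have h2 : ν.restrict D {x | g x ≠ 0} = 0 := by
    have := ae_iff.1 h1
    simpa using this
  rw [Measure.restrict_apply hm] at h2
  simpa [Set.inter_comm] using h2

private lemma score_decomp {Ω : Type*} [MeasurableSpace Ω] (ν : Measure Ω)
    {g : Ω → ℝ} (hgi : Integrable g ν) {T S : Set Ω} (hT : MeasurableSet T)
    (hS : MeasurableSet S) :
    ∫ x in S, g x ∂ν - ∫ x in T, g x ∂ν
      = (∫ x in S \ T, g x ∂ν) - ∫ x in T \ S, g x ∂ν := by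
  have hdS : Disjoint (S ∩ T) (S \ T) :=
    disjoint_sdiff_self_right.mono_left inter_subset_right
  have hdT : Disjoint (S ∩ T) (T \ S) :=
    disjoint_sdiff_self_right.mono_left inter_subset_left
  have h1 : ∫ x in S, g x ∂ν = (∫ x in S ∩ T, g x ∂ν) + ∫ x in S \ T, g x ∂ν := by
    rw [← setIntegral_union hdS (hS.diff hT) hgi.integrableOn hgi.integrableOn,
      Set.inter_union_diff]
  have h2 : ∫ x in T, g x ∂ν = (∫ x in S ∩ T, g x ∂ν) + ∫ x in T \ S, g x ∂ν := by
    rw [← setIntegral_union hdT (hT.diff hS) hgi.integrableOn hgi.integrableOn,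
      Set.inter_comm, Set.inter_union_diff]
  rw [h1, h2]; ring

private lemma score_le {Ω : Type*} [MeasurableSpace Ω] (ν : Measure Ω)
    {g : Ω → ℝ} (hg : Measurable g) (hgi : Integrable g ν)
    {T : Set Ω} (hT : MeasurableSet T) :
    ∫ x in T, g x ∂ν ≤ ∫ x in {x | 0 ≤ g x}, g x ∂ν := by
  have hS : MeasurableSet {x | 0 ≤ g x} := measurableSet_le measurable_const hg
  have h1 : 0 ≤ ∫ x in {x | 0 ≤ g x} \ T, g x ∂ν :=
    setIntegral_nonneg (hS.diff hT) (fun x hx => hx.1)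
  have h2 : ∫ x in T \ {x | 0 ≤ g x}, g x ∂ν ≤ 0 :=
    setIntegral_nonpos (hT.diff hS) (fun x hx => le_of_not_ge hx.2)
  have := score_decomp ν hgi hT hS
  linarith

private lemma key {Ω : Type*} [MeasurableSpace Ω] (ν : Measure Ω)
    {g : Ω → ℝ} (hg : Measurable g) (hgi : Integrable g ν)
    {T : Set Ω} (hT : MeasurableSet T)
    (hzero : ν {x | g x = 0} = 0)
    (heq : ∫ x in T, g x ∂ν = ∫ x in {x | 0 ≤ g x}, g x ∂ν) :
    ν (symmDiff T {x | 0 ≤ g x}) = 0 := by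
  set S := {x | 0 ≤ g x} with hSdef
  have hS : MeasurableSet S := measurableSet_le measurable_const hg
  have h1 : 0 ≤ ∫ x in S \ T, g x ∂ν :=
    setIntegral_nonneg (hS.diff hT) (fun x hx => hx.1)
  have h2 : ∫ x in T \ S, g x ∂ν ≤ 0 :=
    setIntegral_nonpos (hT.diff hS) (fun x hx => le_of_not_ge hx.2)
  have hdec := score_decomp ν hgi hT hS
  rw [← heq, sub_self] at hdec
  have hz1 : ∫ x in S \ T, g x ∂ν = 0 := by linarith
  have hz2 : ∫ x in T \ S, g x ∂ν = 0 := by linarith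
  -- S \ T is null
  have hn1 : ν ((S \ T) ∩ {x | g x ≠ 0}) = 0 :=
    null_of_setIntegral_zero hg hgi (hS.diff hT) (fun x hx => hx.1) hz1
  have hSTnull : ν (S \ T) = 0 := by
    have hsub : S \ T ⊆ ((S \ T) ∩ {x | g x ≠ 0}) ∪ {x | g x = 0} := by
      intro x hx
      by_cases h : g x = 0
      · exact Or.inr h
      · exact Or.inl ⟨hx, h⟩
    exact measure_mono_null hsub (measure_union_null hn1 hzero)
  -- T \ S is null
  have hz2' : ∫ x in T \ S, (-g) x ∂ν = 0 := by
    simpa [integral_neg] using neg_eq_zero.mpr hz2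
  have hn2 : ν ((T \ S) ∩ {x | (-g) x ≠ 0}) = 0 :=
    null_of_setIntegral_zero hg.neg hgi.neg (hT.diff hS)
      (fun x hx => by simpa using le_of_lt (lt_of_not_ge hx.2)) hz2'
  have hTSnull : ν (T \ S) = 0 := by
    refine measure_mono_null (fun x hx => ?_) hn2
    refine ⟨hx, ?_⟩
    have : g x < 0 := lt_of_not_ge hx.2
    simpa using ne_of_gt (neg_pos.mpr this)
  rw [Set.symmDiff_def]
  exact measure_union_null hTSnull hSTnull


/-- Necessity direction of Proposition 1: if the group Bayes classifiers are ν-a.e.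
unique, the data unfairness vanishes, and a classifier `T` attains complete fairness
together with the maximal accuracy `p₀ Acc₀(T*_0) + p₁ Acc₁(T*_1)`, then `T` agrees
with both `T*_0` and `T*_1` up to ν-null sets; in particular `ν(T*_0 Δ T*_1) = 0`. -/
theorem complete_fairness_max_accuracy_forces_identical_boundaries
    {Ω : Type*} [MeasurableSpace Ω] (ν : Measure Ω) [SigmaFinite ν]
    (f : Bool → Bool → Ω → ℝ) (p : Bool → Bool → ℝ)
    (hf_meas : ∀ a y, Measurable (f a y))
    (hf_nonneg : ∀ a y x, 0 ≤ f a y x)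
    (hf_int : ∀ a y, Integrable (f a y) ν)
    (hf_one : ∀ a y, ∫ x, f a y x ∂ν = 1)
    (hp_pos : ∀ a y, 0 < p a y)
    (hp_sum : p false false + p false true + p true false + p true true = 1)
    (Tstar : Bool → Set Ω)
    (hTstar : ∀ a, Tstar a = {x | p a false * f a false x ≤ p a true * f a true x})
    (hunique : ∀ a : Bool, ν {x | p a true * f a true x = p a false * f a false x} = 0)
    (hDU_tpr : tprOf ν f false (Tstar false) = tprOf ν f true (Tstar true))
    (hDU_tnr : tnrOf ν f false (Tstar false) = tnrOf ν f true (Tstar true))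
    (T : Set Ω) (hT : MeasurableSet T)
    (hfair : unfairness ν f T = 0)
    (hacc : accuracy ν f p T
      = (p false true + p false false) * groupAccuracy ν f p false (Tstar false)
        + (p true true + p true false) * groupAccuracy ν f p true (Tstar true)) :
    ν (symmDiff T (Tstar false)) = 0 ∧ ν (symmDiff T (Tstar true)) = 0 ∧
      ν (symmDiff (Tstar false) (Tstar true)) = 0 := by
  set g : Bool → Ω → ℝ := fun a x => p a true * f a true x - p a false * f a false x
    with hgdef
  have hg : ∀ a, Measurable (g a) := fun a =>
    ((hf_meas a true).const_mul _).sub ((hf_meas a false).const_mul _)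
  have hgi : ∀ a, Integrable (g a) ν := fun a =>
    ((hf_int a true).const_mul _).sub ((hf_int a false).const_mul _)
  have hTstar' : ∀ a, Tstar a = {x | 0 ≤ g a x} := by
    intro a
    rw [hTstar a]
    ext x
    simp [hgdef, sub_nonneg]
  have hSm : ∀ a, MeasurableSet (Tstar a) := by
    intro a
    rw [hTstar' a]
    exact measurableSet_le measurable_const (hg a)
  have hscore : ∀ a (U : Set Ω), ∫ x in U, g a x ∂ν
      = p a true * ∫ x in U, f a true x ∂ν - p a false * ∫ x in U, f a false x ∂ν := by
    intro a U
    rw [hgdef]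
    rw [integral_sub ((hf_int a true).const_mul _).integrableOn
      ((hf_int a false).const_mul _).integrableOn, integral_const_mul, integral_const_mul]
  have hcompl : ∀ a y (U : Set Ω), MeasurableSet U →
      ∫ x in Uᶜ, f a y x ∂ν = 1 - ∫ x in U, f a y x ∂ν := by
    intro a y U hU
    have h := integral_add_compl hU (hf_int a y)
    rw [hf_one a y] at h
    linarith
  have E1 : accuracy ν f p T
      = (1/2) * ((∫ x in T, g false x ∂ν) + (∫ x in T, g true x ∂ν)
        + p false false + p true false) := by
    rw [accuracy, hcompl false false T hT, hcompl true false T hT, hscore false T,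
      hscore true T]
    ring
  have E2 : ∀ a, (p a true + p a false) * groupAccuracy ν f p a (Tstar a)
      = (1/2) * ((∫ x in Tstar a, g a x ∂ν) + p a false) := by
    intro a
    have hden : p a true + p a false ≠ 0 :=
      ne_of_gt (add_pos (hp_pos a true) (hp_pos a false))
    rw [groupAccuracy, mul_div_cancel₀ _ hden, hcompl a false _ (hSm a), hscore a]
    ring
  have hle : ∀ a, ∫ x in T, g a x ∂ν ≤ ∫ x in Tstar a, g a x ∂ν := by
    intro a
    rw [hTstar' a]
    exact score_le ν (hg a) (hgi a) hT
  rw [E1, E2 false, E2 true] at hacc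
  have heqa : ∀ a, ∫ x in T, g a x ∂ν = ∫ x in Tstar a, g a x ∂ν := by
    intro a
    have h0 := hle false
    have h1 := hle true
    cases a <;> linarith
  have hzero : ∀ a, ν {x | g a x = 0} = 0 := by
    intro a
    have : {x | g a x = 0} = {x | p a true * f a true x = p a false * f a false x} := by
      ext x
      simp [hgdef, sub_eq_zero]
    rw [this]
    exact hunique a
  have hmain : ∀ a, ν (symmDiff T (Tstar a)) = 0 := by
    intro a
    rw [hTstar' a]
    exact key ν (hg a) (hgi a) hT (hzero a) (by rw [← hTstar' a]; exact heqa a)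
  refine ⟨hmain false, hmain true, ?_⟩
  refine measure_mono_null (symmDiff_triangle (Tstar false) T (Tstar true)) ?_
  exact measure_union_null (by rw [symmDiff_comm]; exact hmain false) (hmain true)
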